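/- There is no threshold sequence for X = ℂⁿ \ {0} (n ≥ 2): for every exhaustion function ρ on X and every sequence of positive reals (R_n), there exists a discrete subset D of X with #{x ∈ D : ρ(x) ≤ R_n} < n for all n which is not tame. -/

import Mathlib

open Set Filter

/-- A holomorphic automorphism of X = ℂⁿ \ {0}. -/
def IsAutPunctured (n : ℕ)
    (φ : EuclideanSpace ℂ (Fin n) → EuclideanSpace ℂ (Fin n)) : Prop :=
  Set.BijOn φ {x | x ≠ 0} {x | x ≠ 0} ∧
  DifferentiableOn ℂ φ {x | x ≠ 0} ∧
  ∃ ψ : EuclideanSpace ℂ (Fin n) → EuclideanSpace ℂ (Fin n),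
    Set.BijOn ψ {x | x ≠ 0} {x | x ≠ 0} ∧ DifferentiableOn ℂ ψ {x | x ≠ 0} ∧
    ∀ x : EuclideanSpace ℂ (Fin n), x ≠ 0 → ψ (φ x) = x ∧ φ (ψ x) = x

/-- An exhaustion function on X = ℂⁿ \ {0}. -/
def IsExhaustionPunctured (n : ℕ) (ρ : EuclideanSpace ℂ (Fin n) → ℝ) : Prop :=
  ContinuousOn ρ {x | x ≠ 0} ∧ (∀ x, 0 ≤ ρ x) ∧
    ∀ c : ℝ, IsCompact {x : EuclideanSpace ℂ (Fin n) | x ≠ 0 ∧ ρ x ≤ c}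

/-- A tame discrete subset of X = ℂⁿ \ {0}. -/
def IsTamePunctured (n : ℕ) (D : Set (EuclideanSpace ℂ (Fin n))) : Prop :=
  ∀ σ, IsExhaustionPunctured n σ →
    ∀ ζ : EuclideanSpace ℂ (Fin n) → ℝ, (∀ x, 0 ≤ ζ x) →
      ∃ φ, IsAutPunctured n φ ∧ ∀ x ∈ D, ζ x ≤ σ (φ x)

section Aux

open Metric Topology

noncomputable section

variable {n : ℕ}

/-- Abbreviation for the ambient space. -/
abbrev EP (n : ℕ) := EuclideanSpace ℂ (Fin n)

lemma EP.exists_unit_orth (hn : 2 ≤ n) (z : EP n) :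
    ∃ e : EP n, ‖e‖ = 1 ∧ (inner ℂ z e : ℂ) = 0 := by
  have hfin : Module.finrank ℂ (EP n) = n := finrank_euclideanSpace_fin
  have hne : (ℂ ∙ z)ᗮ ≠ ⊥ := by
    intro h
    have htop : (ℂ ∙ z) = ⊤ := Submodule.orthogonal_eq_bot_iff.mp h
    have h1 : Module.finrank ℂ (ℂ ∙ z) ≤ 1 := by
      rcases eq_or_ne z 0 with rfl | hz
      · rw [Submodule.span_zero_singleton, finrank_bot]; omega
      · rw [finrank_span_singleton hz]
    rw [htop, finrank_top, hfin] at h1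
    omega
  obtain ⟨e', he'mem, he'⟩ := Submodule.ne_bot_iff _ |>.mp hne
  refine ⟨(‖e'‖ : ℂ)⁻¹ • e', ?_, ?_⟩
  · rw [norm_smul, norm_inv, Complex.norm_real, Real.norm_eq_abs, abs_of_nonneg (norm_nonneg _),
      inv_mul_cancel₀ (norm_ne_zero_iff.mpr he')]
  · rw [inner_smul_right]
    have := he'mem z (Submodule.mem_span_singleton_self z)
    rw [this, mul_zero]

lemma EP.norm_line_sq (z e : EP n) (he : ‖e‖ = 1) (hze : (inner ℂ z e : ℂ) = 0) (w : ℂ) :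
    ‖z + w • e‖ ^ 2 = ‖z‖ ^ 2 + ‖w‖ ^ 2 := by
  rw [@norm_add_sq ℂ _ _ _ _ z (w • e), inner_smul_right, hze, mul_zero, norm_smul, he, mul_one]
  simp

/-- Maximum principle: a holomorphic map on the punctured space is bounded near 0. -/
lemma EP.bounded_near_zero (hn : 2 ≤ n) {φ : EP n → EP n}
    (hd : DifferentiableOn ℂ φ {x : EP n | x ≠ 0}) :
    ∃ M : ℝ, 0 ≤ M ∧ ∀ z : EP n, z ≠ 0 → ‖z‖ ≤ 1 → ‖φ z‖ ≤ M := by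
  have hXopen : IsOpen {x : EP n | x ≠ 0} := isOpen_ne
  set A : Set (EP n) := closedBall 0 2 \ ball 0 1 with hA
  have hAX : A ⊆ {x : EP n | x ≠ 0} := by
    rintro y ⟨-, hy2⟩
    rw [mem_ball_zero_iff, not_lt] at hy2
    intro h0; rw [h0] at hy2; simp at hy2; linarith
  have hAc : IsCompact A := (isCompact_closedBall _ _).diff isOpen_ball
  have hcont : ContinuousOn (fun y => ‖φ y‖) A := ((hd.continuousOn).mono hAX).norm
  have hbdd : BddAbove ((fun y => ‖φ y‖) '' A) := hAc.bddAbove_image hcont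
  set M := sSup ((fun y => ‖φ y‖) '' A) with hM
  have hi : Fin n := ⟨0, by omega⟩
  have hy₀ : (EuclideanSpace.single hi (1:ℂ)) ∈ A := by
    constructor
    · rw [mem_closedBall_zero_iff, EuclideanSpace.norm_single]; norm_num
    · rw [mem_ball_zero_iff, EuclideanSpace.norm_single]; norm_num
  have hM0 : 0 ≤ M := le_trans (norm_nonneg _) (le_csSup hbdd ⟨_, hy₀, rfl⟩)
  refine ⟨M, hM0, fun z hz hz1 => ?_⟩
  obtain ⟨e, he1, he0⟩ := EP.exists_unit_orth hn z
  have hline : ∀ w : ℂ, z + w • e ≠ 0 := by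
    intro w h
    have h2 := EP.norm_line_sq z e he1 he0 w
    rw [h, norm_zero] at h2
    have : ‖z‖ = 0 := by nlinarith [norm_nonneg z, norm_nonneg w]
    exact hz (norm_eq_zero.mp this)
  have hgdiff : Differentiable ℂ (fun w : ℂ => φ (z + w • e)) := by
    intro w
    have h1 : DifferentiableAt ℂ φ (z + w • e) :=
      hd.differentiableAt (hXopen.mem_nhds (hline w))
    exact h1.comp w ((differentiable_id.smul_const e).const_add z |>.differentiableAt)
  have key := Complex.norm_le_of_forall_mem_frontier_norm_le (isBounded_ball (x := (0:ℂ)) (r := 1))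
      hgdiff.diffContOnCl (C := M) ?_ (subset_closure (mem_ball_self one_pos))
  · simpa using key
  · intro w hw
    rw [frontier_ball (0:ℂ) one_ne_zero, mem_sphere_zero_iff_norm] at hw
    have hsq := EP.norm_line_sq z e he1 he0 w
    rw [hw] at hsq
    have hmem : z + w • e ∈ A := by
      constructor
      · rw [mem_closedBall_zero_iff]
        nlinarith [norm_nonneg (z + w • e), norm_nonneg z, hz1, sq_nonneg (‖z + w • e‖ - 2)]
      · rw [mem_ball_zero_iff, not_lt]
        nlinarith [norm_nonneg (z + w • e), norm_nonneg z, sq_nonneg (‖z + w • e‖ - 1)]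
    exact le_csSup hbdd ⟨_, hmem, rfl⟩

/-- Any "automorphism half" of the punctured space tends to 0 at 0. -/
lemma EP.tendsto_zero (hn : 2 ≤ n) {φ ψ : EP n → EP n}
    (hψmap : ∀ x : EP n, x ≠ 0 → ψ x ≠ 0)
    (hψc : ContinuousOn ψ {x : EP n | x ≠ 0})
    (hinv : ∀ x : EP n, x ≠ 0 → ψ (φ x) = x)
    (hd : DifferentiableOn ℂ φ {x : EP n | x ≠ 0}) :
    Tendsto φ (𝓝[{x : EP n | x ≠ 0}] (0 : EP n)) (𝓝 0) := by
  obtain ⟨M, hM0, hM⟩ := EP.bounded_near_zero hn hd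
  have hXopen : IsOpen {x : EP n | x ≠ 0} := isOpen_ne
  set l := 𝓝[{x : EP n | x ≠ 0}] (0 : EP n) with hl
  by_contra hcon
  rw [Metric.tendsto_nhds] at hcon
  push_neg at hcon
  obtain ⟨ε, hε, hfr⟩ := hcon
  replace hfr : ∃ᶠ x in l, ¬ dist (φ x) 0 < ε := hfr.mono fun x h => not_lt.mpr h
  have hG : (l ⊓ 𝓟 {x | ¬ dist (φ x) 0 < ε}).NeBot := frequently_iff_neBot.mp hfr
  set G := l ⊓ 𝓟 {x | ¬ dist (φ x) 0 < ε} with hGdef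
  set K : Set (EP n) := closedBall 0 M \ ball 0 ε with hK
  have hKc : IsCompact K := (isCompact_closedBall _ _).diff isOpen_ball
  have hmem : ∀ᶠ x in G, φ x ∈ K := by
    have h1 : ∀ᶠ x in l, x ∈ {x : EP n | x ≠ 0} := eventually_mem_nhdsWithin
    have h2 : ∀ᶠ x in l, ‖x‖ ≤ 1 := by
      apply Eventually.filter_mono nhdsWithin_le_nhds
      filter_upwards [Metric.closedBall_mem_nhds (0 : EP n) one_pos] with x hx
      rwa [mem_closedBall_zero_iff] at hx
    have h3 : ∀ᶠ x in G, ¬ dist (φ x) 0 < ε :=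
      eventually_inf_principal.mpr (Eventually.of_forall fun x h => h)
    filter_upwards [(h1.and h2).filter_mono inf_le_left, h3] with x hx hx3
    refine ⟨?_, ?_⟩
    · rw [mem_closedBall_zero_iff]; exact hM x hx.1 hx.2
    · rw [mem_ball]; exact hx3
  have hle : map φ G ≤ 𝓟 K := le_principal_iff.mpr (mem_map.mpr hmem)
  obtain ⟨a, haK, hacl⟩ := hKc.exists_clusterPt hle
  have ha0 : a ≠ 0 := by
    intro h; rcases haK with ⟨-, hb⟩; apply hb; rw [h]; exact mem_ball_self hε
  have hacl' : ClusterPt a (map φ l) := hacl.mono (map_mono inf_le_left)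
  have hψa : ContinuousAt ψ a := hψc.continuousAt (hXopen.mem_nhds ha0)
  have hmapeq : map ψ (map φ l) = l := by
    rw [map_map]
    have : map (ψ ∘ φ) l = map id l := by
      apply Filter.map_congr
      filter_upwards [eventually_mem_nhdsWithin] with x hx
      exact hinv x hx
    rw [this, map_id]
  have h3 : ClusterPt (ψ a) l := hacl'.map hψa (le_of_eq hmapeq)
  have h4 : NeBot (𝓝 (ψ a) ⊓ 𝓝 (0 : EP n)) := by
    refine NeBot.mono ?_ (inf_le_inf_left _ (le_trans (le_of_eq hl.symm) nhdsWithin_le_nhds))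
    · exact h3
  exact hψmap a ha0 (eq_of_nhds_neBot h4)

/-- Schwarz-type estimate near the puncture. -/
lemma EP.schwarz_bound {φ : EP n → EP n} {M : ℝ} (hM0 : 0 ≤ M)
    (hd : DifferentiableOn ℂ φ {x : EP n | x ≠ 0})
    (hbound : ∀ z : EP n, z ≠ 0 → ‖z‖ ≤ 1 → ‖φ z‖ ≤ M)
    (htend : Tendsto φ (𝓝[{x : EP n | x ≠ 0}] (0 : EP n)) (𝓝 0)) :
    ∀ y : EP n, y ≠ 0 → ‖y‖ < 1 → ‖φ y‖ ≤ (M + 1) * ‖y‖ := by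
  have hXopen : IsOpen {x : EP n | x ≠ 0} := isOpen_ne
  intro y hy hy1
  have hyn : ‖y‖ ≠ 0 := norm_ne_zero_iff.mpr hy
  have hynC : ((‖y‖ : ℂ)) ≠ 0 := by exact_mod_cast hyn
  set u : EP n := ((‖y‖ : ℂ))⁻¹ • y with hu_def
  have hu0 : u ≠ 0 := smul_ne_zero (inv_ne_zero hynC) hy
  have hun : ∀ w : ℂ, ‖w • u‖ = ‖w‖ := by
    intro w
    rw [hu_def, norm_smul, norm_smul, norm_inv, Complex.norm_real, Real.norm_eq_abs,
      abs_of_nonneg (norm_nonneg y)]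
    field_simp
  set f : ℂ → EP n := fun w => φ (w • u) with hf_def
  set g : ℂ → EP n := Function.update f 0 0 with hg_def
  have hg0 : g 0 = 0 := Function.update_self 0 0 f
  have hsmul_tendsto : Tendsto (fun w : ℂ => w • u) (𝓝[≠] (0 : ℂ))
      (𝓝[{x : EP n | x ≠ 0}] 0) := by
    apply tendsto_nhdsWithin_of_tendsto_nhds_of_eventually_within
    · have hc : Continuous (fun w : ℂ => w • u) := continuous_id.smul continuous_const
      have := hc.tendsto 0
      rw [zero_smul] at this
      exact this.mono_left nhdsWithin_le_nhds
    · filter_upwards [eventually_mem_nhdsWithin] with w hw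
      exact smul_ne_zero hw hu0
  have hcont0 : ContinuousAt g 0 := by
    rw [hg_def, continuousAt_update_same]
    exact htend.comp hsmul_tendsto
  have hgdiff : DifferentiableOn ℂ g (ball (0 : ℂ) 1) := by
    rw [← Complex.differentiableOn_compl_singleton_and_continuousAt_iff
      (ball_mem_nhds (0 : ℂ) one_pos)]
    refine ⟨?_, hcont0⟩
    rintro w ⟨hw1, hw0⟩
    rw [mem_singleton_iff] at hw0
    have hwu : w • u ≠ 0 := smul_ne_zero hw0 hu0
    have hfd : DifferentiableAt ℂ f w := by
      have h1 : DifferentiableAt ℂ φ (w • u) := hd.differentiableAt (hXopen.mem_nhds hwu)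
      exact h1.comp w (differentiable_id.smul_const u |>.differentiableAt)
    have : DifferentiableAt ℂ g w := by
      refine hfd.congr_of_eventuallyEq ?_
      filter_upwards [(isOpen_ne : IsOpen {v : ℂ | v ≠ 0}).mem_nhds hw0] with v hv
      exact Function.update_of_ne hv 0 f
    exact this.differentiableWithinAt
  have hmaps : Set.MapsTo g (ball (0:ℂ) 1) (ball (g 0) (M + 1)) := by
    intro w hw
    rw [hg0, mem_ball_zero_iff]
    rcases eq_or_ne w 0 with rfl | hw0
    · rw [hg0, norm_zero]; linarith
    · rw [hg_def, Function.update_of_ne hw0]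
      have hwu : w • u ≠ 0 := smul_ne_zero hw0 hu0
      have hle1 : ‖w • u‖ ≤ 1 := by rw [hun w]; rw [mem_ball_zero_iff] at hw; exact hw.le
      have := hbound _ hwu hle1
      calc ‖f w‖ ≤ M := this
      _ < M + 1 := by linarith
  have hw₀ : ((‖y‖ : ℂ)) ∈ ball (0:ℂ) 1 := by
    rw [mem_ball_zero_iff, Complex.norm_real, Real.norm_eq_abs, abs_of_nonneg (norm_nonneg y)]
    exact hy1
  have key := Complex.dist_le_div_mul_dist_of_mapsTo_ball hgdiff (hmaps.mono_right ball_subset_closedBall) hw₀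
  have hval : g ((‖y‖ : ℂ)) = φ y := by
    rw [hg_def, Function.update_of_ne hynC]
    show φ ((‖y‖ : ℂ) • ((‖y‖ : ℂ))⁻¹ • y) = φ y
    rw [smul_smul, mul_inv_cancel₀ hynC, one_smul]
  rw [hval, hg0, dist_zero_right, dist_zero_right, Complex.norm_real, Real.norm_eq_abs,
    abs_of_nonneg (norm_nonneg y), div_one] at key
  exact key

end

end Aux

/-- ℂⁿ \ {0} (n ≥ 2) admits no threshold sequence: for every
exhaustion function ρ and every sequence of positive reals (R_n) there is a
discrete subset of ℂⁿ \ {0}, sparse relative to (R_n), which is not tame. -/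
theorem stmt12 {n : ℕ} (hn : 2 ≤ n)
    (ρ : EuclideanSpace ℂ (Fin n) → ℝ) (hρ : IsExhaustionPunctured n ρ)
    (R : ℕ → ℝ) (hRpos : ∀ k, 0 < R k) :
    ∃ D : Set (EuclideanSpace ℂ (Fin n)),
      (∀ x ∈ D, x ≠ 0) ∧ D.Infinite ∧
      (∀ p : EuclideanSpace ℂ (Fin n), p ≠ 0 → ¬ AccPt p (Filter.principal D)) ∧
      (∀ k : ℕ, {x | x ∈ D ∧ ρ x ≤ R k}.encard < (k + 1 : ℕ∞)) ∧
      ¬ IsTamePunctured n D := by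
  classical
  open Metric Topology in
  obtain ⟨hρc, hρ0, hρcomp⟩ := hρ
  -- thresholds coming from compactness of sublevel sets
  have hgap : ∀ c : ℝ, ∃ ε : ℝ, 0 < ε ∧ ∀ x : EP n, x ≠ 0 → ‖x‖ < ε → c < ρ x := by
    intro c
    have hK := hρcomp c
    have h0 : (0 : EP n) ∉ {x : EP n | x ≠ 0 ∧ ρ x ≤ c} := by simp
    have hmem : {x : EP n | x ≠ 0 ∧ ρ x ≤ c}ᶜ ∈ 𝓝 (0 : EP n) :=
      hK.isClosed.isOpen_compl.mem_nhds h0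
    obtain ⟨ε, hε, hsub⟩ := Metric.mem_nhds_iff.mp hmem
    refine ⟨ε, hε, fun x hx hxε => ?_⟩
    have := hsub (by rwa [mem_ball_zero_iff])
    simp only [mem_compl_iff, mem_setOf_eq, not_and, not_le] at this
    exact this hx
  choose ε hεpos hεlt using hgap
  -- the decreasing sequence of radii
  set m : ℕ → ℝ := fun k => (Finset.range (k+1)).inf' Finset.nonempty_range_add_one
    (fun j => ε (R j)) with hm_def
  have hm_pos : ∀ k, 0 < m k := by
    intro k
    rw [hm_def]
    apply Finset.lt_inf'_iff _ |>.mpr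
    intro j _
    exact hεpos (R j)
  have hm_le : ∀ j k : ℕ, j ≤ k → m k ≤ ε (R j) := by
    intro j k hjk
    exact Finset.inf'_le _ (Finset.mem_range.mpr (by omega))
  have hm_anti : ∀ k, m (k+1) ≤ m k := by
    intro k
    apply Finset.le_inf'
    intro j hj
    exact hm_le j (k+1) (by simp at hj; omega)
  set t : ℕ → ℝ := fun k => (1/2 : ℝ)^(k+1) * min 1 (m k) with ht_def
  have htpos : ∀ k, 0 < t k := fun k =>
    mul_pos (pow_pos (by norm_num) _) (lt_min one_pos (hm_pos k))
  have ht_le_pow : ∀ k, t k ≤ (1/2 : ℝ)^k := by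
    intro k
    rw [ht_def]
    have h1 : (1/2 : ℝ)^(k+1) ≤ (1/2 : ℝ)^k := by
      rw [pow_succ]
      nlinarith [pow_pos (by norm_num : (0:ℝ) < 1/2) k]
    nlinarith [pow_pos (by norm_num : (0:ℝ) < 1/2) (k+1), hm_pos k,
      min_le_left 1 (m k), lt_min one_pos (hm_pos k)]
  have ht_lt_m : ∀ j k : ℕ, j ≤ k → t k < ε (R j) := by
    intro j k hjk
    have h1 : t k < m k := by
      rw [ht_def]
      have h2 : (1/2 : ℝ)^(k+1) ≤ 1/2 := by
        calc (1/2 : ℝ)^(k+1) ≤ (1/2 : ℝ)^1 :=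
          pow_le_pow_of_le_one (by norm_num) (by norm_num) (by omega)
        _ = 1/2 := pow_one _
      nlinarith [hm_pos k, min_le_right 1 (m k), lt_min one_pos (hm_pos k),
        pow_pos (by norm_num : (0:ℝ) < 1/2) (k+1)]
    exact lt_of_lt_of_le h1 (hm_le j k hjk)
  have ht_anti : StrictAnti t := by
    apply strictAnti_nat_of_succ_lt
    intro k
    have hmle : min 1 (m (k+1)) ≤ min 1 (m k) := min_le_min le_rfl (hm_anti k)
    rw [ht_def]
    simp only
    have h1 : (0:ℝ) < min 1 (m (k+1)) := lt_min one_pos (hm_pos (k+1))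
    have h2 : (1/2 : ℝ)^(k+1+1) < (1/2 : ℝ)^(k+1) := by
      rw [pow_succ]
      nlinarith [pow_pos (by norm_num : (0:ℝ) < 1/2) (k+1)]
    nlinarith [pow_pos (by norm_num : (0:ℝ) < 1/2) (k+1+1)]
  have htt : Filter.Tendsto t atTop (𝓝 0) := by
    apply squeeze_zero (fun k => (htpos k).le) ht_le_pow
    exact tendsto_pow_atTop_nhds_zero_of_lt_one (by norm_num) (by norm_num)
  -- the sequence of points
  set e₁ : EP n := EuclideanSpace.single (⟨0, by omega⟩ : Fin n) (1 : ℂ) with he₁_def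
  have he₁ : ‖e₁‖ = 1 := by rw [he₁_def, EuclideanSpace.norm_single]; norm_num
  set xs : ℕ → EP n := fun k => t k • e₁ with hxs_def
  have hxnorm : ∀ k, ‖xs k‖ = t k := by
    intro k
    rw [hxs_def]
    simp only
    rw [norm_smul, he₁, Real.norm_eq_abs, abs_of_pos (htpos k), mul_one]
  have hxne : ∀ k, xs k ≠ 0 := by
    intro k h
    have h2 := hxnorm k
    rw [h, norm_zero] at h2
    exact absurd h2.symm (ne_of_gt (htpos k))
  have hxinj : Function.Injective xs := by
    intro a b h
    have h2 := congrArg norm h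
    rw [hxnorm, hxnorm] at h2
    exact ht_anti.injective h2
  refine ⟨Set.range xs, ?_, ?_, ?_, ?_, ?_⟩
  · rintro q ⟨j, rfl⟩; exact hxne j
  · exact Set.infinite_range_of_injective hxinj
  · -- no accumulation point away from 0
    intro p hp hacc
    set r : ℝ := ‖p‖ / 2 with hr_def
    have hr : 0 < r := by
      have : 0 < ‖p‖ := norm_pos_iff.mpr hp
      rw [hr_def]; linarith
    have hfin : {q : EP n | q ∈ Set.range xs ∧ r ≤ ‖q‖}.Finite := by
      obtain ⟨N, hN⟩ := Filter.eventually_atTop.mp (htt.eventually (gt_mem_nhds hr))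
      apply Set.Finite.subset ((Set.finite_Iio N).image xs)
      rintro q ⟨⟨j, rfl⟩, hq⟩
      refine ⟨j, ?_, rfl⟩
      by_contra hj
      rw [Set.mem_Iio, not_lt] at hj
      rw [hxnorm] at hq
      exact absurd (hN j hj) (not_lt.mpr hq)
    set U : Set (EP n) := {q : EP n | r < ‖q‖} \ ({q : EP n | q ∈ Set.range xs ∧ r ≤ ‖q‖} \ {p})
      with hU_def
    have hUopen : IsOpen U :=
      (isOpen_lt continuous_const continuous_norm).sdiff (hfin.diff (t := {p})).isClosed
    have hpU : p ∈ U := by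
      constructor
      · show r < ‖p‖
        have : 0 < ‖p‖ := norm_pos_iff.mpr hp
        rw [hr_def]; linarith
      · rintro ⟨-, hid⟩; exact hid rfl
    have hmem : {p}ᶜ ∩ U ∈ 𝓝[≠] p := inter_mem_nhdsWithin _ (hUopen.mem_nhds hpU)
    obtain ⟨q, ⟨hqne, hqU⟩, hqD⟩ := Filter.inf_principal_neBot_iff.mp hacc _ hmem
    obtain ⟨hq1, hq2⟩ := hqU
    apply hq2
    refine ⟨⟨hqD, le_of_lt hq1⟩, hqne⟩
  · -- sparsity
    intro k
    have hsub : {x : EP n | x ∈ Set.range xs ∧ ρ x ≤ R k} ⊆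
        ↑(Finset.image xs (Finset.range k)) := by
      rintro q ⟨⟨j, rfl⟩, hq⟩
      refine Finset.mem_coe.mpr (Finset.mem_image.mpr ⟨j, Finset.mem_range.mpr ?_, rfl⟩)
      by_contra hj
      rw [not_lt] at hj
      have h1 : ‖xs j‖ < ε (R k) := by rw [hxnorm]; exact ht_lt_m k j hj
      exact absurd hq (not_le.mpr (hεlt (R k) (xs j) (hxne j) h1))
    calc {x : EP n | x ∈ Set.range xs ∧ ρ x ≤ R k}.encard
        ≤ (↑(Finset.image xs (Finset.range k)) : Set (EP n)).encard := Set.encard_mono hsub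
      _ = ((Finset.image xs (Finset.range k)).card : ℕ∞) :=
          Set.encard_coe_eq_coe_finsetCard _
      _ ≤ (k : ℕ∞) := by
          exact_mod_cast (Finset.card_image_le.trans (by simp))
      _ < ((k : ℕ∞) + 1) := by
          exact_mod_cast Nat.lt_succ_self k
  · -- not tame
    intro htame
    set ζ : EP n → ℝ := fun x =>
      1 + |sSup (ρ '' (closedBall 0 1 \ ball 0 (‖x‖^2)))| with hζ_def
    have hζ0 : ∀ x, 0 ≤ ζ x := by
      intro x; rw [hζ_def]; positivity
    obtain ⟨φ, hφaut, hle⟩ := htame ρ ⟨hρc, hρ0, hρcomp⟩ ζ hζ0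
    obtain ⟨hφbij, hφd, ψ, hψbij, hψd, hinv⟩ := hφaut
    have hφmap : ∀ x : EP n, x ≠ 0 → φ x ≠ 0 := fun x hx => hφbij.1 hx
    have hψmap : ∀ x : EP n, x ≠ 0 → ψ x ≠ 0 := fun x hx => hψbij.1 hx
    have htφ : Filter.Tendsto φ (𝓝[{x : EP n | x ≠ 0}] (0 : EP n)) (𝓝 0) :=
      EP.tendsto_zero hn hψmap hψd.continuousOn (fun x hx => (hinv x hx).1) hφd
    have htψ : Filter.Tendsto ψ (𝓝[{x : EP n | x ≠ 0}] (0 : EP n)) (𝓝 0) :=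
      EP.tendsto_zero hn hφmap hφd.continuousOn (fun x hx => (hinv x hx).2) hψd
    obtain ⟨Mψ, hMψ0, hMψ⟩ := EP.bounded_near_zero hn hψd
    have hψlip := EP.schwarz_bound hMψ0 hψd hMψ htψ
    -- the sequence tends to 0 within the punctured space
    have hxt : Filter.Tendsto xs atTop (𝓝[{x : EP n | x ≠ 0}] (0 : EP n)) := by
      apply tendsto_nhdsWithin_of_tendsto_nhds_of_eventually_within
      · rw [tendsto_zero_iff_norm_tendsto_zero]
        exact htt.congr (fun k => (hxnorm k).symm)
      · exact Filter.Eventually.of_forall hxne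
    have hev1 : ∀ᶠ k in atTop, ‖φ (xs k)‖ < 1 := by
      have h := htφ.comp hxt
      have h2 := Metric.tendsto_nhds.mp h 1 one_pos
      filter_upwards [h2] with k hk
      rwa [Function.comp_apply, dist_zero_right] at hk
    have hev2 : ∀ᶠ k in atTop, t k * (Mψ + 1) ≤ 1 := by
      have hpos : (0:ℝ) < 1 / (Mψ + 1) := by positivity
      filter_upwards [htt.eventually (gt_mem_nhds hpos)] with k hk
      rw [← le_div_iff₀ (by positivity : (0:ℝ) < Mψ + 1)]
      exact hk.le
    obtain ⟨k, hk1, hk2⟩ := (hev1.and hev2).exists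
    set p : EP n := xs k with hp_def
    have hp0 : p ≠ 0 := hxne k
    have hpn : ‖p‖ = t k := hxnorm k
    set y : EP n := φ p with hy_def
    have hy0 : y ≠ 0 := hφmap p hp0
    have hy1 : ‖y‖ < 1 := hk1
    have hψy : ψ y = p := (hinv p hp0).1
    have hlow : ‖p‖ ≤ (Mψ + 1) * ‖y‖ := by
      have := hψlip y hy0 hy1
      rwa [hψy] at this
    have hsq : ‖p‖^2 ≤ ‖y‖ := by
      rw [hpn] at hlow ⊢
      nlinarith [htpos k, norm_nonneg y, hMψ0, hk2,
        mul_le_mul_of_nonneg_left hk2 (htpos k).le]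
    set A : Set (EP n) := closedBall 0 1 \ ball 0 (‖p‖^2) with hA_def
    have hyA : y ∈ A := by
      constructor
      · rw [mem_closedBall_zero_iff]; exact hy1.le
      · rw [mem_ball_zero_iff]; exact not_lt.mpr hsq
    have hAX : A ⊆ {x : EP n | x ≠ 0} := by
      rintro q ⟨-, hq2⟩
      rw [mem_ball_zero_iff, not_lt] at hq2
      intro h0
      rw [h0, norm_zero] at hq2
      have : 0 < ‖p‖^2 := pow_pos (norm_pos_iff.mpr hp0) 2
      linarith
    have hbdd : BddAbove (ρ '' A) :=
      (((isCompact_closedBall _ _).diff isOpen_ball)).bddAbove_image (hρc.mono hAX)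
    have hρy : ρ y ≤ sSup (ρ '' A) := le_csSup hbdd ⟨y, hyA, rfl⟩
    have hcontr := hle p ⟨k, rfl⟩
    have hζp : ζ p = 1 + |sSup (ρ '' A)| := rfl
    rw [hζp, ← hy_def] at hcontr
    have habs : sSup (ρ '' A) ≤ |sSup (ρ '' A)| := le_abs_self _
    linarith
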